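/- Let G be a graph that is a disjoint union of trees (a forest). Then for every positive definite matrix A with zeros at the non-edges of G and every subgraph H of G, the thresholded matrix A_H is positive definite. -/

import Mathlib

def threshold {n : ℕ} (G : SimpleGraph (Fin n)) [DecidableRel G.Adj]
    (A : Matrix (Fin n) (Fin n) ℝ) : Matrix (Fin n) (Fin n) ℝ :=
  Matrix.of fun i j => if i = j ∨ G.Adj i j then A i j else 0

lemma reach_adj_of_acyclic {n : ℕ} {G H : SimpleGraph (Fin n)} (hforest : G.IsAcyclic)
    (hsub : H ≤ G) {i j : Fin n} (hr : H.Reachable i j) (hg : G.Adj i j) :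
    H.Adj i j := by
  classical
  obtain ⟨w⟩ := hr
  set p : H.Path i j := w.toPath with hp
  by_cases he : s(j, i) ∈ (p : H.Walk i j).edges
  · exact ((p : H.Walk i j).adj_of_mem_edges he).symm
  · exfalso
    have hq : ((p : H.Walk i j).mapLe hsub).IsPath := p.2.mapLe hsub
    have he' : s(j, i) ∉ ((p : H.Walk i j).mapLe hsub).edges := by
      have hedges : ((p : H.Walk i j).mapLe hsub).edges = (p : H.Walk i j).edges := by
        have hid : (⇑(SimpleGraph.Hom.ofLE hsub)) = id := rfl
        simp [SimpleGraph.Walk.mapLe, SimpleGraph.Walk.edges_map, hid, Sym2.map_id,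
          List.map_id]
      rw [hedges]; exact he
    exact hforest _ (SimpleGraph.Path.cons_isCycle ⟨_, hq⟩ hg.symm he')

lemma threshold_eq_if {n : ℕ} {G H : SimpleGraph (Fin n)} [DecidableRel G.Adj]
    [DecidableRel H.Adj] (hforest : G.IsAcyclic) (hsub : H ≤ G)
    {A : Matrix (Fin n) (Fin n) ℝ}
    (hzeros : ∀ i j : Fin n, i ≠ j → ¬ G.Adj i j → A i j = 0) (i j : Fin n) :
    threshold H A i j = if H.Reachable i j then A i j else 0 := by
  classical
  unfold threshold
  by_cases hij : i = j
  · subst hij; simp [SimpleGraph.Reachable.refl]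
  by_cases hH : H.Adj i j
  · simp [hH, hH.reachable]
  · simp only [Matrix.of_apply, hij, hH, or_self, if_false]
    by_cases hr : H.Reachable i j
    · rw [if_pos hr]
      by_cases hG : G.Adj i j
      · exact absurd (reach_adj_of_acyclic hforest hsub hr hG) hH
      · exact (hzeros i j hij hG).symm
    · rw [if_neg hr]

theorem stmt_12 {n : ℕ} (G : SimpleGraph (Fin n)) [DecidableRel G.Adj]
    (hforest : G.IsAcyclic)
    (A : Matrix (Fin n) (Fin n) ℝ) (hA : A.PosDef)
    (hzeros : ∀ i j : Fin n, i ≠ j → ¬ G.Adj i j → A i j = 0)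
    (H : SimpleGraph (Fin n)) [DecidableRel H.Adj] (hsub : H ≤ G) :
    (threshold H A).PosDef := by
  classical
  have hsym : ∀ i j, A i j = A j i := by
    intro i j
    have := congrFun (congrFun hA.1 i) j
    simpa using this.symm
  refine Matrix.PosDef.of_dotProduct_mulVec_pos ?_ ?_
  · ext i j
    simp only [Matrix.conjTranspose_apply, threshold, Matrix.of_apply, star_trivial]
    rw [hsym j i]
    by_cases h : i = j ∨ H.Adj i j
    · have h' : j = i ∨ H.Adj j i := by
        rcases h with h | h
        · exact Or.inl h.symm
        · exact Or.inr h.symm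
      rw [if_pos h', if_pos h]
    · have h' : ¬ (j = i ∨ H.Adj j i) := by
        rintro (rfl | hadj)
        · exact h (Or.inl rfl)
        · exact h (Or.inr hadj.symm)
      rw [if_neg h', if_neg h]
  · intro x hx
    set y : H.ConnectedComponent → (Fin n) → ℝ :=
      fun k i => if H.connectedComponentMk i = k then x i else 0 with hy
    have key : ∀ i j, x i * threshold H A i j * x j
        = ∑ k : H.ConnectedComponent, y k i * A i j * y k j := by
      intro i j
      rw [threshold_eq_if hforest hsub hzeros i j]
      by_cases hr : H.Reachable i j
      · rw [if_pos hr]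
        have hk : H.connectedComponentMk i = H.connectedComponentMk j :=
          SimpleGraph.ConnectedComponent.sound hr
        rw [Finset.sum_eq_single (H.connectedComponentMk i)]
        · simp [hy, hk.symm, mul_comm, mul_assoc, mul_left_comm]
        · intro k _ hk'
          have h0 : H.connectedComponentMk i ≠ k := fun h => hk' h.symm
          simp [hy, h0]
        · simp
      · rw [if_neg hr]
        rw [Finset.sum_eq_zero]
        · ring
        · intro k _
          by_cases h1 : H.connectedComponentMk i = k
          · by_cases h2 : H.connectedComponentMk j = k
            · exact absurd (SimpleGraph.ConnectedComponent.exact (h1.trans h2.symm)) hr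
            · simp [hy, h2]
          · simp [hy, h1]
    have main : dotProduct (star x) ((threshold H A).mulVec x)
        = ∑ k : H.ConnectedComponent, dotProduct (star (y k)) (A.mulVec (y k)) := by
      simp only [dotProduct, Matrix.mulVec, star_trivial, Pi.star_apply]
      calc ∑ i, x i * ∑ j, threshold H A i j * x j
          = ∑ i, ∑ j, x i * threshold H A i j * x j := by
            simp [Finset.mul_sum, mul_assoc]
        _ = ∑ i, ∑ j, ∑ k : H.ConnectedComponent, y k i * A i j * y k j := by
            simp only [key]
        _ = ∑ i, ∑ k : H.ConnectedComponent, ∑ j, y k i * A i j * y k j :=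
            Finset.sum_congr rfl fun i _ => Finset.sum_comm
        _ = ∑ k : H.ConnectedComponent, ∑ i, ∑ j, y k i * A i j * y k j :=
            Finset.sum_comm
        _ = ∑ k : H.ConnectedComponent, ∑ i, y k i * ∑ j, A i j * y k j := by
            simp [Finset.mul_sum, mul_assoc]
    rw [main]
    obtain ⟨i, hxi⟩ := Function.ne_iff.mp hx
    have hy0 : y (H.connectedComponentMk i) ≠ 0 := by
      intro h
      have := congrFun h i
      simp [hy] at this
      exact hxi this
    apply Finset.sum_pos'
    · intro k _
      exact hA.posSemidef.dotProduct_mulVec_nonneg (y k)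
    · exact ⟨H.connectedComponentMk i, Finset.mem_univ _, hA.dotProduct_mulVec_pos hy0⟩
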